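/- For a ∈ Δ_s(n), the number of elements of Δ_s(n) that cover a in the dominance order equals the number of nonzero entries among a_1, ..., a_{s-1} (i.e., the Hamming weight of (a_1,...,a_{s-1})). -/
import Mathlib

def psum {s : ℕ} (a : Fin s → ℕ) (j : Fin s) : ℕ :=
  ∑ i : Fin s, if i ≤ j then a i else 0


def Dom {s : ℕ} (a b : Fin s → ℕ) : Prop := ∀ j : Fin s, psum a j ≤ psum b j

def SDom {s : ℕ} (a b : Fin s → ℕ) : Prop := Dom a b ∧ a ≠ b

def CoversWC {s : ℕ} (n : ℕ) (a b : Fin s → ℕ) : Prop :=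
  SDom a b ∧ ∀ c : Fin s → ℕ, (∑ i, c i = n) → SDom a c → SDom c b → False

def prevF {s : ℕ} (k : Fin s) : Fin s := ⟨k.val - 1, lt_of_le_of_lt (Nat.sub_le _ _) k.isLt⟩

def move {s : ℕ} (a : Fin s → ℕ) (k : Fin s) : Fin s → ℕ :=
  Function.update (Function.update a k (a k - 1)) (prevF k) (a (prevF k) + 1)

lemma prevF_ne {s : ℕ} {k : Fin s} (hk : k.val ≠ 0) : prevF k ≠ k := by
  simp only [Fin.ne_iff_vne, prevF]; omega

lemma move_add {s : ℕ} (a : Fin s → ℕ) (k : Fin s) (hk : k.val ≠ 0) (hak : a k ≠ 0)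
    (i : Fin s) :
    move a k i + (if i = k then 1 else 0) = a i + (if i = prevF k then 1 else 0) := by
  rcases eq_or_ne i (prevF k) with rfl | hp
  · simp [move, Function.update_apply, prevF_ne hk]
  · rcases eq_or_ne i k with rfl | hq
    · simp only [move, Function.update_apply]
      rw [if_neg hp, if_neg hp]
      simp only [if_true]
      omega
    · simp [move, Function.update_apply, hp, hq]

lemma psum_mono {s : ℕ} (a : Fin s → ℕ) {j j' : Fin s} (h : j ≤ j') : psum a j ≤ psum a j' := by
  apply Finset.sum_le_sum
  intro i _
  by_cases hi : i ≤ j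
  · simp [hi, le_trans hi h]
  · simp [hi]

lemma psum_le_sum {s : ℕ} (a : Fin s → ℕ) (j : Fin s) : psum a j ≤ ∑ i, a i := by
  apply Finset.sum_le_sum
  intro i _
  split <;> simp

lemma psum_move {s : ℕ} (a : Fin s → ℕ) (k : Fin s) (hk : k.val ≠ 0) (hak : a k ≠ 0)
    (j : Fin s) :
    psum (move a k) j = psum a j + (if j = prevF k then 1 else 0) := by
  have key : psum (move a k) j + (if k ≤ j then 1 else 0)
      = psum a j + (if prevF k ≤ j then 1 else 0) := by
    have e1 : psum (move a k) j + (if k ≤ j then 1 else 0)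
        = ∑ i : Fin s, ((if i ≤ j then move a k i else 0) + (if i ≤ j then (if i = k then 1 else 0) else 0)) := by
      rw [Finset.sum_add_distrib]
      congr 1
      have : ∀ i : Fin s, (if i ≤ j then (if i = k then 1 else 0) else 0)
          = (if i = k then (if k ≤ j then 1 else 0) else 0) := by
        intro i
        rcases eq_or_ne i k with rfl | h
        · simp
        · simp [h]
      simp_rw [this]
      simp
    have e2 : psum a j + (if prevF k ≤ j then 1 else 0)
        = ∑ i : Fin s, ((if i ≤ j then a i else 0) + (if i ≤ j then (if i = prevF k then 1 else 0) else 0)) := by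
      rw [Finset.sum_add_distrib]
      congr 1
      have : ∀ i : Fin s, (if i ≤ j then (if i = prevF k then 1 else 0) else 0)
          = (if i = prevF k then (if prevF k ≤ j then 1 else 0) else 0) := by
        intro i
        rcases eq_or_ne i (prevF k) with rfl | h
        · simp
        · simp [h]
      simp_rw [this]
      simp
    rw [e1, e2]
    apply Finset.sum_congr rfl
    intro i _
    by_cases hi : i ≤ j
    · simp only [if_pos hi]
      exact move_add a k hk hak i
    · simp [hi]
  have hpk : (prevF k).val + 1 = k.val := by simp [prevF]; omega
  by_cases hkj : k ≤ j
  · have h1 : prevF k ≤ j := by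
      rw [Fin.le_def] at *; omega
    have h2 : j ≠ prevF k := by
      rw [Fin.le_def] at hkj; simp only [Fin.ne_iff_vne]; omega
    simp only [if_pos hkj, if_pos h1, if_neg h2] at *
    omega
  · by_cases h1 : prevF k ≤ j
    · have h2 : j = prevF k := by
        rw [Fin.le_def] at *; simp only [Fin.ext_iff]; omega
      simp only [if_neg hkj, if_pos h1, if_pos h2] at *
      omega
    · have h2 : j ≠ prevF k := fun h => h1 (le_of_eq h.symm)
      simp only [if_neg hkj, if_neg h1, if_neg h2] at *
      omega

lemma sum_move {s : ℕ} (a : Fin s → ℕ) (k : Fin s) (hk : k.val ≠ 0) (hak : a k ≠ 0) :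
    ∑ i, move a k i = ∑ i, a i := by
  have := Finset.sum_congr rfl (fun i (_ : i ∈ Finset.univ) => move_add a k hk hak i)
  rw [Finset.sum_add_distrib, Finset.sum_add_distrib] at this
  simp only [Finset.sum_ite_eq', Finset.mem_univ, if_pos] at this
  omega

lemma psum_zero {s : ℕ} (a : Fin s → ℕ) (j : Fin s) (hj : j.val = 0) : psum a j = a j := by
  unfold psum
  have : ∀ i : Fin s, (if i ≤ j then a i else 0) = (if i = j then a i else 0) := by
    intro i
    rcases eq_or_ne i j with rfl | h
    · simp
    · rw [if_neg h, if_neg]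
      rw [Fin.le_def]
      simp only [Fin.ne_iff_vne] at h
      omega
  simp_rw [this]
  simp

lemma psum_succ {s : ℕ} (a : Fin s → ℕ) (j : Fin s) (hj : j.val ≠ 0) :
    psum a j = psum a (prevF j) + a j := by
  have key : ∀ i : Fin s, (if i ≤ j then a i else 0)
      = (if i ≤ prevF j then a i else 0) + (if i = j then a i else 0) := by
    intro i
    have hpj : (prevF j).val + 1 = j.val := by simp [prevF]; omega
    rcases eq_or_ne i j with rfl | h
    · rw [if_pos le_rfl, if_pos rfl, if_neg]
      · simp
      · rw [Fin.le_def]; omega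
    · rw [if_neg h]
      simp only [Fin.ne_iff_vne] at h
      by_cases hi : i ≤ j
      · have hi2 : i ≤ prevF j := by rw [Fin.le_def] at hi ⊢; omega
        rw [if_pos hi, if_pos hi2]
        omega
      · have hi2 : ¬ i ≤ prevF j := by rw [Fin.le_def] at hi ⊢; omega
        rw [if_neg hi, if_neg hi2]
  unfold psum
  simp_rw [key]
  rw [Finset.sum_add_distrib]
  simp


lemma psum_inj {s : ℕ} {a b : Fin s → ℕ} (h : ∀ j, psum a j = psum b j) : a = b := by
  funext j
  by_cases hj : j.val = 0
  · rw [← psum_zero a j hj, ← psum_zero b j hj, h]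
  · have ha := psum_succ a j hj
    have hb := psum_succ b j hj
    have h1 := h j
    have h2 := h (prevF j)
    omega

lemma exists_lt {s : ℕ} {a b : Fin s → ℕ} (hd : Dom a b) (hne : a ≠ b) :
    ∃ j, psum a j < psum b j := by
  by_contra h
  push_neg at h
  exact hne (psum_inj fun j => le_antisymm (hd j) (h j))

lemma exists_k {s : ℕ} {a b : Fin s → ℕ} (hsum : ∑ i, a i = ∑ i, b i)
    (hd : Dom a b) (hne : a ≠ b) :
    ∃ k : Fin s, k.val ≠ 0 ∧ a k ≠ 0 ∧ Dom (move a k) b := by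
  obtain ⟨j, hj⟩ := exists_lt hd hne
  set K : Finset (Fin s) := Finset.univ.filter (fun k => j < k ∧ a k ≠ 0) with hK
  have hKne : K.Nonempty := by
    by_contra hemp
    rw [Finset.not_nonempty_iff_eq_empty] at hemp
    have hz : ∀ i : Fin s, j < i → a i = 0 := by
      intro i hi
      by_contra hai
      have : i ∈ K := by simp [hK, hi, hai]
      simp [hemp] at this
    have heq : psum a j = ∑ i, a i := by
      unfold psum
      apply Finset.sum_congr rfl
      intro i _
      by_cases hi : i ≤ j
      · rw [if_pos hi]
      · rw [if_neg hi, hz i (lt_of_not_ge hi)]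
    have := psum_le_sum b j
    omega
  set k := K.min' hKne with hk
  have hkK : k ∈ K := K.min'_mem hKne
  simp only [hK, Finset.mem_filter] at hkK
  obtain ⟨-, hjk, hak⟩ := hkK
  have hkv : k.val ≠ 0 := by
    rw [Fin.lt_def] at hjk; omega
  refine ⟨k, hkv, hak, ?_⟩
  have hjpk : j ≤ prevF k := by
    rw [Fin.lt_def] at hjk; rw [Fin.le_def]; simp [prevF]; omega
  have hpa : psum a (prevF k) = psum a j := by
    unfold psum
    apply Finset.sum_congr rfl
    intro i _
    by_cases hi : i ≤ j
    · rw [if_pos hi, if_pos (le_trans hi hjpk)]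
    · by_cases hi2 : i ≤ prevF k
      · rw [if_pos hi2, if_neg hi]
        by_contra hai
        have hiK : i ∈ K := by
          simp only [hK, Finset.mem_filter, Finset.mem_univ, true_and]
          exact ⟨lt_of_not_ge hi, fun h => hai (h ▸ rfl)⟩
        have := K.min'_le i hiK
        rw [← hk] at this
        rw [Fin.le_def] at this hi2
        simp only [prevF] at hi2
        omega
      · rw [if_neg hi, if_neg hi2]
  intro j'
  rw [psum_move a k hkv hak j']
  by_cases hj' : j' = prevF k
  · subst hj'
    rw [if_pos rfl]
    have : psum b j ≤ psum b (prevF k) := psum_mono b hjpk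
    omega
  · rw [if_neg hj']
    simpa using hd j'



lemma move_ne {s : ℕ} (a : Fin s → ℕ) (k : Fin s) (hk : k.val ≠ 0) (hak : a k ≠ 0) :
    a ≠ move a k := by
  intro h
  have h1 := psum_move a k hk hak (prevF k)
  rw [← h, if_pos rfl] at h1
  omega

lemma dom_move {s : ℕ} (a : Fin s → ℕ) (k : Fin s) (hk : k.val ≠ 0) (hak : a k ≠ 0) :
    Dom a (move a k) := by
  intro j
  rw [psum_move a k hk hak j]
  omega

lemma covers_move {s n : ℕ} (a : Fin s → ℕ) (_ha : ∑ i, a i = n) (k : Fin s)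
    (hk : k.val ≠ 0) (hak : a k ≠ 0) : CoversWC n a (move a k) := by
  refine ⟨⟨dom_move a k hk hak, move_ne a k hk hak⟩, ?_⟩
  rintro c hc ⟨hac, hane⟩ ⟨hcb, hcne⟩
  by_cases hmid : psum c (prevF k) = psum a (prevF k)
  · apply hane
    apply psum_inj
    intro j
    have h1 := hac j
    have h2 := hcb j
    rw [psum_move a k hk hak j] at h2
    by_cases hj : j = prevF k
    · subst hj; omega
    · rw [if_neg hj] at h2; omega
  · apply hcne
    apply psum_inj
    intro j
    have h1 := hac j
    have h2 := hcb j
    have h3 := hac (prevF k)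
    have h4 := hcb (prevF k)
    rw [psum_move a k hk hak j] at h2 ⊢
    rw [psum_move a k hk hak (prevF k), if_pos rfl] at h4
    by_cases hj : j = prevF k
    · subst hj; rw [if_pos rfl]; omega
    · rw [if_neg hj] at h2 ⊢; omega

lemma move_injOn {s : ℕ} (a : Fin s → ℕ) {k k' : Fin s}
    (hk : k.val ≠ 0) (hak : a k ≠ 0) (hk' : k'.val ≠ 0) (hak' : a k' ≠ 0)
    (h : move a k = move a k') : k = k' := by
  have h1 := psum_move a k hk hak (prevF k)
  have h2 := psum_move a k' hk' hak' (prevF k)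
  rw [if_pos rfl] at h1
  rw [h] at h1
  by_cases hp : prevF k = prevF k'
  · simp only [prevF, Fin.ext_iff] at hp ⊢
    omega
  · rw [if_neg hp] at h2
    omega

/-- the number of elements of Δ_s(n) covering `a` equals the
Hamming weight of (a_1,…,a_{s-1}). -/
theorem card_covers (s n : ℕ) (a : Fin s → ℕ) (ha : ∑ i, a i = n) :
    Set.ncard {b : Fin s → ℕ | (∑ i, b i = n) ∧ CoversWC n a b} =
      (Finset.univ.filter (fun i : Fin s => i.val ≠ 0 ∧ a i ≠ 0)).card := by
  set F := Finset.univ.filter (fun i : Fin s => i.val ≠ 0 ∧ a i ≠ 0) with hF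
  have hset : {b : Fin s → ℕ | (∑ i, b i = n) ∧ CoversWC n a b} = ↑(F.image (move a)) := by
    ext b
    simp only [Set.mem_setOf_eq, Finset.coe_image, Set.mem_image, Finset.mem_coe,
      Finset.mem_filter, Finset.mem_univ, true_and, hF]
    constructor
    · rintro ⟨hb, ⟨⟨hd, hne⟩, hmin⟩⟩
      obtain ⟨k, hk, hak, hdm⟩ := exists_k (ha.trans hb.symm) hd hne
      refine ⟨k, ⟨hk, hak⟩, ?_⟩
      by_contra hne2
      exact hmin (move a k) (by rw [sum_move a k hk hak]; exact ha)
        ⟨dom_move a k hk hak, move_ne a k hk hak⟩ ⟨hdm, hne2⟩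
    · rintro ⟨k, ⟨hk, hak⟩, rfl⟩
      exact ⟨by rw [sum_move a k hk hak]; exact ha, covers_move a ha k hk hak⟩
  rw [hset, Set.ncard_coe_finset]
  apply Finset.card_image_of_injOn
  intro k hkF k' hkF' h
  simp only [hF, Finset.mem_coe, Finset.mem_filter, Finset.mem_univ, true_and] at hkF hkF'
  exact move_injOn a hkF.1 hkF.2 hkF'.1 hkF'.2 h
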